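/- arXiv:1403.4673 — 2 statements merged into one kernel-verified Lean document; each statement's English description precedes it below -/
import Mathlib

section
/- Let H be a Hopf algebra over k acting inner faithfully on a left H-module M, and let H' ⊆ H be a Hopf subalgebra. Then M is inner faithful as an H'-module. Consequently, any Hopf subalgebra of a Galois-theoretical Hopf algebra is Galois-theoretical. -/
open TensorProduct

/-- A grouplike element of a Hopf algebra. -/
def IsGrouplike (k : Type) {H : Type} [CommSemiring k] [Semiring H] [HopfAlgebra k H]
    (g : H) : Prop :=
  g ≠ 0 ∧ Coalgebra.comul (R := k) g = g ⊗ₜ[k] g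

/-- A Hopf ideal of a Hopf algebra `H` over `k`: a two-sided ideal which is also a coideal
and is stable under the antipode. -/
structure HopfIdeal (k H : Type) [CommSemiring k] [Semiring H] [HopfAlgebra k H] where
  carrier : Submodule k H
  mul_mem_left : ∀ (a : H) {x : H}, x ∈ carrier → a * x ∈ carrier
  mul_mem_right : ∀ (a : H) {x : H}, x ∈ carrier → x * a ∈ carrier
  comul_mem : ∀ x ∈ carrier, Coalgebra.comul (R := k) x ∈
      (LinearMap.range (TensorProduct.map carrier.subtype (LinearMap.id (M := H))) ⊔
       LinearMap.range (TensorProduct.map (LinearMap.id (M := H)) carrier.subtype))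
  counit_eq_zero : ∀ x ∈ carrier, Coalgebra.counit (R := k) x = 0
  antipode_mem : ∀ x ∈ carrier, HopfAlgebra.antipode (R := k) x ∈ carrier

/-- A (left) action of a Hopf algebra `H` on an algebra `A`, making `A` an `H`-module algebra:
`h ⬝ (a b) = ∑ (h₁ ⬝ a) (h₂ ⬝ b)` and `h ⬝ 1 = ε(h) 1`. -/
structure HopfAction (k H A : Type) [CommSemiring k] [Semiring H] [HopfAlgebra k H]
    [Semiring A] [Algebra k A] where
  act : H →ₐ[k] Module.End k A
  act_mul : ∀ (h : H) (a b : A),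
    act h (a * b) = LinearMap.mul' k A
      (TensorProduct.map ((act.toLinearMap : H →ₗ[k] A →ₗ[k] A).flip a)
        ((act.toLinearMap : H →ₗ[k] A →ₗ[k] A).flip b) (Coalgebra.comul (R := k) h))
  act_one : ∀ h : H, act h (1 : A) = Coalgebra.counit (R := k) h • (1 : A)

/-- A module over a Hopf algebra (given by its structure map `ρ`) is inner faithful if no
nonzero Hopf ideal annihilates it. -/
def InnerFaithful (k : Type) {H M : Type} [CommSemiring k] [Semiring H] [HopfAlgebra k H]
    [AddCommMonoid M] [Module k M] (ρ : H →ₗ[k] Module.End k M) : Prop :=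
  ∀ I : HopfIdeal k H, (∀ x ∈ I.carrier, ρ x = 0) → I.carrier = ⊥

/-- A witness that the Hopf algebra `H` is Galois-theoretical: a field `L ⊇ k` together with an
inner faithful `H`-module algebra structure on `L`. -/
structure GTWitness (k H : Type) [Field k] [Semiring H] [HopfAlgebra k H] : Type 1 where
  L : Type
  [fieldL : Field L]
  [algL : Algebra k L]
  action : HopfAction k H L
  faithful : InnerFaithful k action.act.toLinearMap

/-- A Hopf algebra is Galois-theoretical if it acts inner faithfully and `k`-linearly on a field
containing `k`. -/
def GaloisTheoretical (k H : Type) [Field k] [Semiring H] [HopfAlgebra k H] : Prop :=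
  Nonempty (GTWitness k H)

/-- The set of invariants of a Hopf algebra action. -/
def HopfAction.invariants {k H A : Type} [CommSemiring k] [Semiring H] [HopfAlgebra k H]
    [Semiring A] [Algebra k A] (ha : HopfAction k H A) : Set A :=
  {a : A | ∀ h : H, ha.act h a = Coalgebra.counit (R := k) h • a}

/-- A subcoalgebra: a subspace `V` with `Δ(V) ⊆ V ⊗ V`. -/
def IsSubcoalgebra (k : Type) {H : Type} [CommSemiring k] [Semiring H] [HopfAlgebra k H]
    (V : Submodule k H) : Prop :=
  ∀ x ∈ V, Coalgebra.comul (R := k) x ∈ LinearMap.range (TensorProduct.map V.subtype V.subtype)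

/-- A simple subcoalgebra: a nonzero subcoalgebra with no nonzero proper subcoalgebras. -/
def IsSimpleSubcoalgebra (k : Type) {H : Type} [CommSemiring k] [Semiring H] [HopfAlgebra k H]
    (V : Submodule k H) : Prop :=
  IsSubcoalgebra k V ∧ V ≠ ⊥ ∧
    ∀ W : Submodule k H, IsSubcoalgebra k W → W ≤ V → W = ⊥ ∨ W = V

/-- The coradical of a Hopf algebra: the sum of all its simple subcoalgebras. -/
def coradical (k H : Type) [CommSemiring k] [Semiring H] [HopfAlgebra k H] : Submodule k H :=
  sSup {V : Submodule k H | IsSimpleSubcoalgebra k V}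

/-- A Hopf algebra is pointed iff its coradical is spanned by the grouplike elements. -/
def IsPointedHopf (k H : Type) [CommSemiring k] [Semiring H] [HopfAlgebra k H] : Prop :=
  coradical k H = Submodule.span k {g : H | IsGrouplike k g}

open TensorProduct Coalgebra

section Conv
variable {R C A : Type} [CommSemiring R] [AddCommMonoid C] [Module R C] [Coalgebra R C]
  [Semiring A] [Algebra R A]

/-- Convolution product of linear maps from a coalgebra to an algebra. -/
noncomputable def conv (φ ψ : C →ₗ[R] A) : C →ₗ[R] A :=
  LinearMap.mul' R A ∘ₗ TensorProduct.map φ ψ ∘ₗ Coalgebra.comul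

/-- Convolution unit. -/
noncomputable def convOne : C →ₗ[R] A := Algebra.linearMap R A ∘ₗ Coalgebra.counit

lemma conv_repr {ι : Type*} (φ ψ : C →ₗ[R] A) (c : C) (r : Coalgebra.Repr R c ι) :
    conv φ ψ c = ∑ i ∈ r.index, φ (r.left i) * ψ (r.right i) := by
  simp only [conv, LinearMap.comp_apply, ← r.eq, map_sum, TensorProduct.map_tmul,
    LinearMap.mul'_apply]

lemma convOne_apply (c : C) : convOne (R := R) (A := A) c = algebraMap R A (counit c) := rfl

lemma convOne_conv (φ : C →ₗ[R] A) : conv convOne φ = φ := by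
  ext c
  rw [conv_repr _ _ c (ℛ R c)]
  have h := Coalgebra.sum_counit_tmul_map_eq (R := R) φ c (repr := ℛ R c)
  have h2 := congrArg (TensorProduct.lid R A) h
  simp only [map_sum, TensorProduct.lid_tmul] at h2
  simp only [convOne_apply]
  rw [one_smul] at h2
  rw [← h2]
  exact Finset.sum_congr rfl fun i _ => (Algebra.smul_def _ _).symm

lemma conv_convOne (φ : C →ₗ[R] A) : conv φ convOne = φ := by
  ext c
  rw [conv_repr _ _ c (ℛ R c)]
  have h := Coalgebra.sum_map_tmul_counit_eq (R := R) φ c (repr := ℛ R c)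
  have h2 := congrArg (TensorProduct.rid R A) h
  simp only [map_sum, TensorProduct.rid_tmul] at h2
  simp only [convOne_apply]
  rw [one_smul] at h2
  rw [← h2]
  refine Finset.sum_congr rfl fun i _ => ?_
  rw [Algebra.smul_def, ← Algebra.commutes]

lemma conv_assoc (φ ψ χ : C →ₗ[R] A) : conv (conv φ ψ) χ = conv φ (conv ψ χ) := by
  ext c
  set r := ℛ R c
  set r₁ : ∀ i : r.ι, Coalgebra.Repr R (r.left i) (C × C) := fun i => ℛ R (r.left i) with hr₁
  set r₂ : ∀ i : r.ι, Coalgebra.Repr R (r.right i) (C × C) := fun i => ℛ R (r.right i) with hr₂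
  have key := Coalgebra.sum_map_tmul_tmul_eq (R := R) φ ψ χ c (repr := r) (a₁ := r₁) (a₂ := r₂)
  have key2 := congrArg (LinearMap.mul' R A ∘ₗ LinearMap.lTensor A (LinearMap.mul' R A)) key
  simp only [map_sum, LinearMap.comp_apply, LinearMap.lTensor_tmul, LinearMap.mul'_apply] at key2
  calc conv (conv φ ψ) χ c
      = ∑ i ∈ r.index, conv φ ψ (r.left i) * χ (r.right i) := conv_repr _ _ c r
    _ = ∑ i ∈ r.index, ∑ j ∈ (r₁ i).index,
          φ ((r₁ i).left j) * (ψ ((r₁ i).right j) * χ (r.right i)) := by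
        refine Finset.sum_congr rfl fun i _ => ?_
        rw [conv_repr _ _ _ (r₁ i), Finset.sum_mul]
        exact Finset.sum_congr rfl fun j _ => mul_assoc _ _ _
    _ = ∑ i ∈ r.index, ∑ j ∈ (r₂ i).index,
          φ (r.left i) * (ψ ((r₂ i).left j) * χ ((r₂ i).right j)) := key2.symm
    _ = conv φ (conv ψ χ) c := by
        rw [conv_repr _ _ c r]
        refine Finset.sum_congr rfl fun i _ => ?_
        rw [conv_repr _ _ _ (r₂ i), Finset.mul_sum]

lemma conv_eq_of_inv {φ ψ χ : C →ₗ[R] A} (h1 : conv χ φ = convOne) (h2 : conv φ ψ = convOne) :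
    χ = ψ := by
  rw [← conv_convOne χ, ← h2, ← conv_assoc, h1, convOne_conv]

end Conv

section Antipode
open HopfAlgebra

variable {R H H' : Type} [CommRing R] [Ring H] [Ring H'] [HopfAlgebra R H] [HopfAlgebra R H']

/-- Push a `Coalgebra.Repr` forward along a coalgebra homomorphism. -/
noncomputable def Coalgebra.Repr.push (f : H' →ₐc[R] H) {ι : Type*} {x : H'} (r : Coalgebra.Repr R x ι) :
    Coalgebra.Repr R (f x) ι where
  index := r.index
  left := fun i => f (r.left i)
  right := fun i => f (r.right i)
  eq := by
    rw [← CoalgHomClass.map_comp_comul_apply f x, ← r.eq, map_sum]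
    simp

lemma antipode_comp_bialgHom (f : H' →ₐc[R] H) :
    (antipode (R := R) (A := H)) ∘ₗ f.toLinearMap
      = f.toLinearMap ∘ₗ (antipode (R := R) (A := H')) := by
  refine conv_eq_of_inv (φ := f.toLinearMap) ?_ ?_
  · ext x
    rw [conv_repr _ _ x (ℛ R x), convOne_apply]
    have h := sum_antipode_mul_eq_algebraMap_counit (R := R) ((ℛ R x).push f)
    simp only [Coalgebra.Repr.push] at h
    rw [CoalgHomClass.counit_comp_apply f x] at h
    rw [← h]
    exact Finset.sum_congr rfl fun i _ => rfl
  · ext x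
    rw [conv_repr _ _ x (ℛ R x), convOne_apply]
    have h := sum_mul_antipode_eq_algebraMap_counit (R := R) (ℛ R x)
    calc ∑ i ∈ (ℛ R x).index,
          f.toLinearMap ((ℛ R x).left i) * (f.toLinearMap ∘ₗ antipode R) ((ℛ R x).right i)
        = f (∑ i ∈ (ℛ R x).index, (ℛ R x).left i * antipode (R := R) ((ℛ R x).right i)) := by
          rw [map_sum]
          exact Finset.sum_congr rfl fun i _ => (map_mul f _ _).symm
      _ = algebraMap R H (counit (R := R) x) := by rw [h]; exact AlgHomClass.commutes f _

lemma ttt_mul (u v : H ⊗[R] H) :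
    (TensorProduct.map (LinearMap.mul' R H) (LinearMap.mul' R H))
      (Algebra.TensorProduct.tensorTensorTensorComm R R R R H H H H (u ⊗ₜ[R] v)) = u * v := by
  induction u using TensorProduct.induction_on with
  | zero => simp
  | add x y hx hy => simp only [add_tmul, map_add, hx, hy, add_mul]
  | tmul a₁ a₂ =>
    induction v using TensorProduct.induction_on with
    | zero => simp
    | add x y hx hy => simp only [tmul_add, map_add, hx, hy, mul_add]
    | tmul b₁ b₂ =>
      simp [Algebra.TensorProduct.tensorTensorTensorComm_tmul,
        Algebra.TensorProduct.tmul_mul_tmul]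

lemma map_mul'_comul_tmul (a b : H) :
    (TensorProduct.map (LinearMap.mul' R H) (LinearMap.mul' R H))
      (Coalgebra.comul (R := R) (a ⊗ₜ[R] b)) = Coalgebra.comul (R := R) (a * b) := by
  have hc : Coalgebra.comul (R := R) (a ⊗ₜ[R] b)
      = Algebra.TensorProduct.tensorTensorTensorComm R R R R H H H H
          (Coalgebra.comul (R := R) a ⊗ₜ[R] Coalgebra.comul (R := R) b) := rfl
  rw [hc, Bialgebra.comul_mul]
  exact ttt_mul _ _

lemma counit_tmul (a b : H) :
    Coalgebra.counit (R := R) (a ⊗ₜ[R] b)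
      = Coalgebra.counit (R := R) a * Coalgebra.counit (R := R) b :=
  (TensorProduct.counit_tmul a b).trans (mul_comm _ _)

lemma antipode_mul_anti (a b : H) :
    antipode (R := R) (a * b) = antipode (R := R) b * antipode (R := R) a := by
  have key : (LinearMap.mul' R H ∘ₗ TensorProduct.map (antipode R) (antipode R)
        ∘ₗ (TensorProduct.comm R H H).toLinearMap)
      = (antipode (R := R) (A := H)) ∘ₗ LinearMap.mul' R H := by
    refine conv_eq_of_inv (φ := LinearMap.mul' R H) ?_ ?_
    · -- conv χ mul = one
      apply TensorProduct.ext'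
      intro a b
      set ra := ℛ R a
      set rb := ℛ R b
      have hΔ : Coalgebra.comul (R := R) (a ⊗ₜ[R] b)
          = ∑ i ∈ ra.index, ∑ j ∈ rb.index,
              (ra.left i ⊗ₜ[R] rb.left j) ⊗ₜ[R] (ra.right i ⊗ₜ[R] rb.right j) := by
        have hc : Coalgebra.comul (R := R) (a ⊗ₜ[R] b)
            = Algebra.TensorProduct.tensorTensorTensorComm R R R R H H H H
                (Coalgebra.comul (R := R) a ⊗ₜ[R] Coalgebra.comul (R := R) b) := rfl
        rw [hc, ← ra.eq, ← rb.eq, sum_tmul]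
        rw [map_sum]
        refine Finset.sum_congr rfl fun i _ => ?_
        rw [tmul_sum, map_sum]
        refine Finset.sum_congr rfl fun j _ => ?_
        exact Algebra.TensorProduct.tensorTensorTensorComm_tmul ..
      rw [conv, convOne]
      simp only [LinearMap.comp_apply, hΔ, map_sum, TensorProduct.map_tmul,
        LinearMap.mul'_apply, TensorProduct.comm_tmul, LinearEquiv.coe_coe,
        Algebra.linearMap_apply, _root_.counit_tmul]
      have step : ∀ j ∈ rb.index,
          ∑ i ∈ ra.index, (antipode (R := R) (rb.left j) * antipode (R := R) (ra.left i))
              * (ra.right i * rb.right j)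
          = algebraMap R H (Coalgebra.counit (R := R) a)
              * (antipode (R := R) (rb.left j) * rb.right j) := by
        intro j _
        have : ∀ i ∈ ra.index,
            (antipode (R := R) (rb.left j) * antipode (R := R) (ra.left i))
              * (ra.right i * rb.right j)
            = antipode (R := R) (rb.left j)
                * ((antipode (R := R) (ra.left i) * ra.right i) * rb.right j) := by
          intro i _
          rw [mul_assoc, ← mul_assoc (antipode (R := R) (ra.left i))]
        rw [Finset.sum_congr rfl this, ← Finset.mul_sum, ← Finset.sum_mul,
          sum_antipode_mul_eq_algebraMap_counit (R := R) ra]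
        simp only [← mul_assoc]
        rw [Algebra.commutes]
      rw [Finset.sum_comm, Finset.sum_congr rfl step, ← Finset.mul_sum,
        sum_antipode_mul_eq_algebraMap_counit (R := R) rb, ← map_mul]
    · -- conv mul (S ∘ mul) = one
      apply TensorProduct.ext'
      intro a b
      have hmap : (TensorProduct.map (LinearMap.mul' R H)
            ((antipode (R := R) (A := H)) ∘ₗ LinearMap.mul' R H))
          = LinearMap.lTensor H (antipode (R := R) (A := H))
              ∘ₗ TensorProduct.map (LinearMap.mul' R H) (LinearMap.mul' R H) := by
        apply TensorProduct.ext'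
        intro u v
        simp
      rw [conv, convOne]
      simp only [LinearMap.comp_apply, hmap, map_mul'_comul_tmul,
        mul_antipode_lTensor_comul_apply, Algebra.linearMap_apply, _root_.counit_tmul,
        Bialgebra.counit_mul]
  have := congrArg (fun g => g (a ⊗ₜ[R] b)) key
  simpa using this.symm

end Antipode

section Main

open HopfAlgebra

variable {k H H' : Type} [Field k] [Ring H] [Ring H'] [HopfAlgebra k H] [HopfAlgebra k H']

lemma range_map_left_mem {P : Submodule k H} {j : H} (hj : j ∈ P) (h : H) :
    j ⊗ₜ[k] h ∈ LinearMap.range (TensorProduct.map P.subtype (LinearMap.id (M := H))) :=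
  ⟨(⟨j, hj⟩ : P) ⊗ₜ[k] h, rfl⟩

lemma range_map_right_mem {P : Submodule k H} {j : H} (hj : j ∈ P) (h : H) :
    h ⊗ₜ[k] j ∈ LinearMap.range (TensorProduct.map (LinearMap.id (M := H)) P.subtype) :=
  ⟨h ⊗ₜ[k] (⟨j, hj⟩ : P), rfl⟩

lemma range_left_mul_stable {P : Submodule k H}
    (hL : ∀ (a : H) {x : H}, x ∈ P → a * x ∈ P) (hR : ∀ (a : H) {x : H}, x ∈ P → x * a ∈ P)
    {z : H ⊗[k] H} (hz : z ∈ LinearMap.range (TensorProduct.map P.subtype (LinearMap.id (M := H))))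
    (t t' : H ⊗[k] H) :
    t * z * t' ∈ LinearMap.range (TensorProduct.map P.subtype (LinearMap.id (M := H))) := by
  obtain ⟨w, rfl⟩ := hz
  induction w using TensorProduct.induction_on with
  | zero => simpa using Submodule.zero_mem _
  | add x y hx hy =>
    rw [map_add, mul_add, add_mul]
    exact Submodule.add_mem _ hx hy
  | tmul j h =>
    simp only [TensorProduct.map_tmul, Submodule.coe_subtype, LinearMap.id_coe, id_eq]
    induction t using TensorProduct.induction_on with
    | zero => simpa using Submodule.zero_mem _
    | add x y hx hy =>
      rw [add_mul, add_mul]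
      exact Submodule.add_mem _ hx hy
    | tmul u v =>
      induction t' using TensorProduct.induction_on with
      | zero => simpa using Submodule.zero_mem _
      | add x y hx hy =>
        rw [mul_add]
        exact Submodule.add_mem _ hx hy
      | tmul u' v' =>
        rw [Algebra.TensorProduct.tmul_mul_tmul, Algebra.TensorProduct.tmul_mul_tmul]
        exact range_map_left_mem (hR u' (hL u j.2)) _

lemma range_right_mul_stable {P : Submodule k H}
    (hL : ∀ (a : H) {x : H}, x ∈ P → a * x ∈ P) (hR : ∀ (a : H) {x : H}, x ∈ P → x * a ∈ P)
    {z : H ⊗[k] H} (hz : z ∈ LinearMap.range (TensorProduct.map (LinearMap.id (M := H)) P.subtype))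
    (t t' : H ⊗[k] H) :
    t * z * t' ∈ LinearMap.range (TensorProduct.map (LinearMap.id (M := H)) P.subtype) := by
  obtain ⟨w, rfl⟩ := hz
  induction w using TensorProduct.induction_on with
  | zero => simpa using Submodule.zero_mem _
  | add x y hx hy =>
    rw [map_add, mul_add, add_mul]
    exact Submodule.add_mem _ hx hy
  | tmul h j =>
    simp only [TensorProduct.map_tmul, Submodule.coe_subtype, LinearMap.id_coe, id_eq]
    induction t using TensorProduct.induction_on with
    | zero => simpa using Submodule.zero_mem _
    | add x y hx hy =>
      rw [add_mul, add_mul]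
      exact Submodule.add_mem _ hx hy
    | tmul u v =>
      induction t' using TensorProduct.induction_on with
      | zero => simpa using Submodule.zero_mem _
      | add x y hx hy =>
        rw [mul_add]
        exact Submodule.add_mem _ hx hy
      | tmul u' v' =>
        rw [Algebra.TensorProduct.tmul_mul_tmul, Algebra.TensorProduct.tmul_mul_tmul]
        exact range_map_right_mem (hR v' (hL v j.2)) _

lemma push_range_left {P : Submodule k H'} {Q : Submodule k H} (g : H' →ₗ[k] H)
    (hPQ : ∀ x ∈ P, g x ∈ Q) (w : P ⊗[k] H') :
    TensorProduct.map g g (TensorProduct.map P.subtype (LinearMap.id (M := H')) w)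
      ∈ LinearMap.range (TensorProduct.map Q.subtype (LinearMap.id (M := H))) := by
  induction w using TensorProduct.induction_on with
  | zero => simpa using Submodule.zero_mem _
  | add u v hu hv => rw [map_add, map_add]; exact Submodule.add_mem _ hu hv
  | tmul x' h' =>
    simp only [TensorProduct.map_tmul, Submodule.coe_subtype, LinearMap.id_coe, id_eq]
    exact range_map_left_mem (hPQ _ x'.2) _

lemma push_range_right {P : Submodule k H'} {Q : Submodule k H} (g : H' →ₗ[k] H)
    (hPQ : ∀ x ∈ P, g x ∈ Q) (w : H' ⊗[k] P) :
    TensorProduct.map g g (TensorProduct.map (LinearMap.id (M := H')) P.subtype w)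
      ∈ LinearMap.range (TensorProduct.map (LinearMap.id (M := H)) Q.subtype) := by
  induction w using TensorProduct.induction_on with
  | zero => simpa using Submodule.zero_mem _
  | add u v hu hv => rw [map_add, map_add]; exact Submodule.add_mem _ hu hv
  | tmul h' x' =>
    simp only [TensorProduct.map_tmul, Submodule.coe_subtype, LinearMap.id_coe, id_eq]
    exact range_map_right_mem (hPQ _ x'.2) _

/-- Key lemma: restriction of inner faithful action along an injective bialgebra map is
inner faithful. -/
theorem innerFaithful_comp (f : H' →ₐc[k] H) (hf : Function.Injective f)
    (M : Type) [AddCommGroup M] [Module k M] (ρ : H →ₐ[k] Module.End k M)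
    (hρ : InnerFaithful k ρ.toLinearMap) :
    InnerFaithful k (ρ.comp (f : H' →ₐ[k] H)).toLinearMap := by
  intro I hI
  set G : Set H := {z | ∃ a x b, x ∈ I.carrier ∧ z = a * f x * b} with hG
  set J : Submodule k H := Submodule.span k G with hJ
  have hgen : ∀ (a : H) {x : H'} (b : H), x ∈ I.carrier → a * f x * b ∈ J :=
    fun a x b hx => Submodule.subset_span ⟨a, x, b, hx, rfl⟩
  have hfmem : ∀ x ∈ I.carrier, f x ∈ J := fun x hx => by
    simpa using hgen 1 1 hx
  have hmulL : ∀ (t : H) {z : H}, z ∈ J → t * z ∈ J := by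
    intro t z hz
    induction hz using Submodule.span_induction with
    | mem z hzG =>
      obtain ⟨a, x, b, hx, rfl⟩ := hzG
      have : t * (a * f x * b) = (t * a) * f x * b := by noncomm_ring
      rw [this]; exact hgen _ _ hx
    | zero => simpa using Submodule.zero_mem J
    | add u v hu hv hu' hv' => rw [mul_add]; exact Submodule.add_mem _ hu' hv'
    | smul c u hu hu' => rw [mul_smul_comm]; exact Submodule.smul_mem _ _ hu'
  have hmulR : ∀ (t : H) {z : H}, z ∈ J → z * t ∈ J := by
    intro t z hz
    induction hz using Submodule.span_induction with
    | mem z hzG =>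
      obtain ⟨a, x, b, hx, rfl⟩ := hzG
      have : (a * f x * b) * t = a * f x * (b * t) := by noncomm_ring
      rw [this]; exact hgen _ _ hx
    | zero => simpa using Submodule.zero_mem J
    | add u v hu hv hu' hv' => rw [add_mul]; exact Submodule.add_mem _ hu' hv'
    | smul c u hu hu' => rw [smul_mul_assoc]; exact Submodule.smul_mem _ _ hu'
  have hSf : ∀ x : H', antipode (R := k) (f x) = f (antipode (R := k) x) := by
    intro x
    exact congrArg (fun g => g x) (antipode_comp_bialgHom f)
  -- the Hopf ideal of `H` generated by the image of `I`
  set JI : HopfIdeal k H :=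
    { carrier := J
      mul_mem_left := hmulL
      mul_mem_right := hmulR
      comul_mem := by
        intro z hz
        induction hz using Submodule.span_induction with
        | mem z hzG =>
          obtain ⟨a, x, b, hx, rfl⟩ := hzG
          rw [Bialgebra.comul_mul, Bialgebra.comul_mul]
          obtain ⟨p, hp, q, hq, hpq⟩ := Submodule.mem_sup.mp (I.comul_mem x hx)
          have hcf : Coalgebra.comul (R := k) (f x)
              = TensorProduct.map f.toLinearMap f.toLinearMap (p + q) := by
            rw [hpq]
            exact (CoalgHomClass.map_comp_comul_apply f x).symm
          have hfp : TensorProduct.map f.toLinearMap f.toLinearMap p ∈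
              LinearMap.range (TensorProduct.map J.subtype (LinearMap.id (M := H))) := by
            obtain ⟨w, hw⟩ := hp
            rw [← hw]
            exact push_range_left f.toLinearMap (fun x hx => hfmem x hx) w
          have hfq : TensorProduct.map f.toLinearMap f.toLinearMap q ∈
              LinearMap.range (TensorProduct.map (LinearMap.id (M := H)) J.subtype) := by
            obtain ⟨w, hw⟩ := hq
            rw [← hw]
            exact push_range_right f.toLinearMap (fun x hx => hfmem x hx) w
          rw [hcf, map_add, mul_add, add_mul]
          refine Submodule.add_mem _ ?_ ?_
          · exact Submodule.mem_sup_left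
              (range_left_mul_stable hmulL hmulR hfp _ _)
          · exact Submodule.mem_sup_right
              (range_right_mul_stable hmulL hmulR hfq _ _)
        | zero => simpa using Submodule.zero_mem _
        | add u v hu hv hu' hv' => rw [map_add]; exact Submodule.add_mem _ hu' hv'
        | smul c u hu hu' => rw [map_smul]; exact Submodule.smul_mem _ _ hu'
      counit_eq_zero := by
        intro z hz
        have hle : J ≤ LinearMap.ker (Coalgebra.counit (R := k) (A := H)) := by
          rw [hJ, Submodule.span_le]
          rintro z ⟨a, x, b, hx, rfl⟩
          rw [SetLike.mem_coe, LinearMap.mem_ker, Bialgebra.counit_mul, Bialgebra.counit_mul,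
            CoalgHomClass.counit_comp_apply f x, I.counit_eq_zero x hx, mul_zero, zero_mul]
        exact hle hz
      antipode_mem := by
        intro z hz
        have hle : J ≤ J.comap (antipode (R := k) (A := H)) := by
          rw [hJ, Submodule.span_le]
          rintro z ⟨a, x, b, hx, rfl⟩
          rw [SetLike.mem_coe, Submodule.mem_comap, antipode_mul_anti, antipode_mul_anti, hSf,
            ← mul_assoc]
          exact hgen _ _ (I.antipode_mem x hx)
        exact hle hz } with hJI
  have hkill : ∀ z ∈ JI.carrier, ρ.toLinearMap z = 0 := by
    intro z hz
    have hle : J ≤ LinearMap.ker ρ.toLinearMap := by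
      rw [hJ, Submodule.span_le]
      rintro z ⟨a, x, b, hx, rfl⟩
      have hx0 : ρ (f x) = 0 := hI x hx
      rw [SetLike.mem_coe, LinearMap.mem_ker, AlgHom.toLinearMap_apply, map_mul, map_mul, hx0,
        mul_zero, zero_mul]
    exact hle hz
  have hJbot : J = ⊥ := hρ JI hkill
  rw [eq_bot_iff]
  intro x hx
  have h0 : f x = 0 := by
    have hm := hfmem x hx
    rw [hJbot, Submodule.mem_bot] at hm
    exact hm
  rw [Submodule.mem_bot]
  exact hf (by rw [h0, map_zero])

end Main

/-- The restriction of an inner faithful action of a Hopf algebra `H` to a Hopf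
subalgebra `H'` (formalized as an injective bialgebra homomorphism `f : H' →ₐc[k] H`; a bialgebra
map between Hopf algebras is automatically a Hopf algebra map) is inner faithful.  Consequently,
any Hopf subalgebra of a Galois-theoretical Hopf algebra is Galois-theoretical. -/
theorem innerFaithful_restrict_hopfSubalgebra
    (k : Type) [Field k] [IsAlgClosed k] [CharZero k]
    (H H' : Type) [Ring H] [HopfAlgebra k H] [Ring H'] [HopfAlgebra k H']
    (f : H' →ₐc[k] H) (hf : Function.Injective f) :
    (∀ (M : Type) [AddCommGroup M] [Module k M] (ρ : H →ₐ[k] Module.End k M),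
        InnerFaithful k ρ.toLinearMap →
          InnerFaithful k (ρ.comp (f : H' →ₐ[k] H)).toLinearMap) ∧
    (GaloisTheoretical k H → GaloisTheoretical k H') := by
  constructor
  · intro M _ _ ρ hρ
    exact innerFaithful_comp f hf M ρ hρ
  · rintro ⟨w⟩
    letI := w.fieldL
    letI := w.algL
    refine ⟨⟨w.L, { act := w.action.act.comp (f : H' →ₐ[k] H), act_mul := ?_, act_one := ?_ },
      innerFaithful_comp f hf w.L w.action.act w.faithful⟩⟩
    · intro h a b
      have hflip : ∀ c : w.L,
          ((w.action.act.comp (f : H' →ₐ[k] H)).toLinearMap :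
              H' →ₗ[k] w.L →ₗ[k] w.L).flip c
            = ((w.action.act.toLinearMap : H →ₗ[k] w.L →ₗ[k] w.L).flip c) ∘ₗ
                (f : H' →ₐ[k] H).toLinearMap := fun c => rfl
      calc (w.action.act.comp (f : H' →ₐ[k] H)) h (a * b)
          = w.action.act (f h) (a * b) := rfl
        _ = LinearMap.mul' k w.L
            (TensorProduct.map ((w.action.act.toLinearMap : H →ₗ[k] w.L →ₗ[k] w.L).flip a)
              ((w.action.act.toLinearMap : H →ₗ[k] w.L →ₗ[k] w.L).flip b)
              (Coalgebra.comul (R := k) (f h))) := w.action.act_mul (f h) a b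
        _ = _ := by
            rw [← CoalgHomClass.map_comp_comul_apply f h, hflip a, hflip b,
              TensorProduct.map_comp, LinearMap.comp_apply]
            rfl
    · intro h
      calc (w.action.act.comp (f : H' →ₐ[k] H)) h (1 : w.L)
          = w.action.act (f h) 1 := rfl
        _ = Coalgebra.counit (R := k) (f h) • (1 : w.L) := w.action.act_one (f h)
        _ = _ := by rw [CoalgHomClass.counit_comp_apply f h]
end

section
/- Let F be a field of characteristic zero containing a primitive n-th root of unity, and let v ∈ F^×. Then the polynomial tⁿ − v is irreducible in F[t] if and only if v is not an n'-th power in F for any divisor n' > 1 of n. -/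
open Polynomial IntermediateField AdjoinRoot

/-- Norm computation: if `g` is an irreducible factor of `X ^ n - C a`, then the norm of
the root of `g` satisfies `N(r) ^ n = a ^ deg g`. -/
lemma aux_norm_key {K : Type} [Field K] {n : ℕ} (hn : 0 < n) {a : K} {g : K[X]}
    (hg : Irreducible g) (hg' : g ∣ X ^ n - C a) :
    (Algebra.norm K (AdjoinRoot.root g)) ^ n = a ^ g.natDegree := by
  have : Fact (Irreducible g) := ⟨hg⟩
  have := eval₂_eq_zero_of_dvd_of_eval₂_eq_zero _ _ hg' (AdjoinRoot.eval₂_root g)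
  rw [eval₂_sub, eval₂_pow, eval₂_C, eval₂_X, sub_eq_zero] at this
  rw [← map_pow, this, ← AdjoinRoot.algebraMap_eq, Algebra.norm_algebraMap,
    ← finrank_top', ← IntermediateField.adjoin_root_eq_top g,
    IntermediateField.adjoin.finrank,
    AdjoinRoot.minpoly_root hg.ne_zero, natDegree_mul_C]
  · simpa using hg.ne_zero
  · exact AdjoinRoot.isIntegral_root hg.ne_zero

theorem X_pow_sub_C_irreducible_of_not_pow
    {F : Type} [Field F] {n : ℕ} (hn : 0 < n) {ζ : F} (hζ : IsPrimitiveRoot ζ n)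
    {v : F} (hv : v ≠ 0)
    (H : ∀ n' : ℕ, 1 < n' → n' ∣ n → ∀ f : F, f ^ n' ≠ v) :
    Irreducible (X ^ n - C v) := by
  have hunit : ¬ IsUnit (X ^ n - C v) := by
    rw [Polynomial.isUnit_iff_degree_eq_zero, degree_X_pow_sub_C hn, Nat.cast_eq_zero]
    omega
  obtain ⟨g, hg, hg'⟩ := WfDvdMonoid.exists_irreducible_factor hunit (X_pow_sub_C_ne_zero hn v)
  suffices g.natDegree = n from (associated_of_dvd_of_natDegree_le hg'
    (X_pow_sub_C_ne_zero hn v) (this.trans natDegree_X_pow_sub_C.symm).ge).irreducible hg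
  by_contra hne
  set d := g.natDegree with hd
  have hd1 : 1 ≤ d := natDegree_pos_iff_degree_pos.mpr (Polynomial.degree_pos_of_irreducible hg)
  have hdn : d ≤ n := (natDegree_le_of_dvd hg' (X_pow_sub_C_ne_zero hn v)).trans_eq
    natDegree_X_pow_sub_C
  have hdlt : d < n := lt_of_le_of_ne hdn hne
  set c : F := Algebra.norm F (AdjoinRoot.root g) with hc
  have key : c ^ n = v ^ d := aux_norm_key hn hg hg'
  set g0 := Nat.gcd n d with hg0
  have hg0pos : 0 < g0 := Nat.gcd_pos_of_pos_left _ hn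
  set n' := n / g0 with hn'
  set d' := d / g0 with hd'
  have hng : g0 ∣ n := Nat.gcd_dvd_left n d
  have hdg : g0 ∣ d := Nat.gcd_dvd_right n d
  have hnn' : n = n' * g0 := (Nat.div_mul_cancel hng).symm
  have hdd' : d = d' * g0 := (Nat.div_mul_cancel hdg).symm
  have hn'dvd : n' ∣ n := ⟨g0, hnn'⟩
  have hn'1 : 1 < n' := by
    rcases Nat.lt_or_ge 1 n' with h | h
    · exact h
    · exfalso
      interval_cases n'
      · omega
      · -- n = g0, so n ∣ d, but d < n
        have : g0 ≤ d := Nat.le_of_dvd (by omega) hdg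
        omega
  have hcne : c ≠ 0 := by
    intro h
    rw [h, zero_pow (by omega)] at key
    exact hv (pow_eq_zero_iff (by omega) |>.mp key.symm)
  -- (v ^ d' / c ^ n') ^ g0 = 1
  have hω : (v ^ d' / c ^ n') ^ g0 = 1 := by
    rw [div_pow, ← pow_mul, ← pow_mul, ← hdd', ← hnn', key, div_self]
    exact pow_ne_zero _ hv
  -- ζ ^ n' is a primitive g0-th root of unity
  have hζ' : IsPrimitiveRoot (ζ ^ n') g0 := hζ.pow (by omega) hnn'
  have : NeZero g0 := ⟨by omega⟩
  obtain ⟨s, -, hs⟩ := hζ'.eq_pow_of_pow_eq_one hω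
  -- v ^ d' = (c * ζ ^ s) ^ n'
  have hvd' : v ^ d' = (c * ζ ^ s) ^ n' := by
    have : ((ζ ^ n') ^ s) * c ^ n' = v ^ d' := by
      rw [hs, div_mul_cancel₀]
      exact pow_ne_zero _ hcne
    rw [mul_pow, ← this, ← pow_mul, ← pow_mul, mul_comm s n']
    ring
  -- coprimality and Bezout
  have hcop : Nat.Coprime d' n' := (Nat.coprime_div_gcd_div_gcd (hg0 ▸ hg0pos)).symm
  obtain ⟨u, -, hu⟩ := Nat.exists_mul_mod_eq_one_of_coprime hcop hn'1
  obtain ⟨t, hbez⟩ : ∃ t, d' * u = t * n' + 1 := by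
    refine ⟨d' * u / n', ?_⟩
    conv_lhs => rw [← Nat.div_add_mod (d' * u) n']
    rw [hu]
    ring
  have h2 : ((c * ζ ^ s) ^ u) ^ n' = v ^ (t * n' + 1) := by
    rw [← pow_mul, mul_comm u n', pow_mul, ← hvd', ← pow_mul, hbez]
  refine H n' hn'1 hn'dvd ((c * ζ ^ s) ^ u / v ^ t) ?_
  rw [div_pow, h2, ← pow_mul, pow_succ]
  exact mul_div_cancel_left₀ _ (pow_ne_zero _ hv)

/-- **Statement 15.** Let `F` be a field of characteristic zero containing a primitive `n`-th
root of unity, and let `v ∈ F^×`.  Then `Xⁿ - v` is irreducible in `F[X]` iff `v` is not an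
`n'`-th power in `F` for any divisor `n' > 1` of `n`. -/
theorem X_pow_sub_C_irreducible_iff_not_pow
    (F : Type) [Field F] [CharZero F]
    (n : ℕ) (hn : 0 < n) (ζ : F) (hζ : IsPrimitiveRoot ζ n)
    (v : F) (hv : v ≠ 0) :
    Irreducible (Polynomial.X ^ n - Polynomial.C v) ↔
      ∀ n' : ℕ, 1 < n' → n' ∣ n → ¬∃ f : F, f ^ n' = v := by
  constructor
  · intro hirr n' h1 h2 ⟨f, hf⟩
    exact pow_ne_of_irreducible_X_pow_sub_C hirr h2 (by omega) f hf
  · intro H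
    exact X_pow_sub_C_irreducible_of_not_pow hn hζ hv (fun n' h1 h2 f hf => H n' h1 h2 ⟨f, hf⟩)
end
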